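/- Let X and Y be Banach spaces and assume Y has Property 𝒬. If there exists a uniformly continuous map φ : B_X → Y, defined on the closed unit ball B_X of X, such that ρ̄_φ(t) > 0 for some t ∈ (0,1), then X has Property 𝒬. -/

import Mathlib

open Metric
open scoped ENNReal NNReal

/-- Exact compression modulus. -/
noncomputable def exactComp {M N : Type*} [PseudoMetricSpace M] [PseudoMetricSpace N]
    (f : M → N) (t : ℝ) : ℝ :=
  sInf {r : ℝ | ∃ x y : M, dist x y = t ∧ dist (f x) (f y) = r}

/-- Coarse map: the expansion modulus is finite for every t. -/
def Coarse {M N : Type*} [PseudoMetricSpace M] [PseudoMetricSpace N] (f : M → N) : Prop :=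
  ∀ t : ℝ, ∃ C : ℝ, ∀ x y : M, dist x y ≤ t → dist (f x) (f y) ≤ C

/-- Solvent map. -/
def Solvent {M N : Type*} [PseudoMetricSpace M] [PseudoMetricSpace N] (f : M → N) : Prop :=
  ∀ n : ℕ, ∃ R : ℝ, 0 < R ∧ ∀ x y : M,
    dist x y ∈ Set.Icc R (R + (n : ℝ)) → (n : ℝ) < dist (f x) (f y)

/-- Almost uncollapsed map. -/
noncomputable def AlmostUncollapsed {M N : Type*} [PseudoMetricSpace M] [PseudoMetricSpace N]
    (f : M → N) : Prop :=
  ∃ t : ℝ, 0 < t ∧ 0 < exactComp f t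

/-- Two strictly increasing k-tuples interlace:
n₁ ≤ m₁ ≤ n₂ ≤ … ≤ n_k ≤ m_k or m₁ ≤ n₁ ≤ m₂ ≤ … ≤ m_k ≤ n_k. -/
def Interlace {k : ℕ} (nb mb : Fin k → ℕ) : Prop :=
    ((∀ i, nb i ≤ mb i) ∧ ∀ i j : Fin k, (i : ℕ) + 1 = (j : ℕ) → mb i ≤ nb j) ∨
    ((∀ i, mb i ≤ nb i) ∧ ∀ i j : Fin k, (i : ℕ) + 1 = (j : ℕ) → nb i ≤ mb j)

/-- Property Q(ε,δ): elements of P_k(ℕ) are encoded as strictly increasing k-tuples. -/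
def PropertyQED (M : Type*) [PseudoMetricSpace M] (ε δ : ℝ) : Prop :=
  ∀ (k : ℕ) (f : (Fin k → ℕ) → M),
    (∀ nb mb : Fin k → ℕ, StrictMono nb → StrictMono mb → Interlace nb mb →
      dist (f nb) (f mb) ≤ δ) →
    ∃ 𝕄 : Set ℕ, 𝕄.Infinite ∧
      ∀ nb mb : Fin k → ℕ, StrictMono nb → StrictMono mb →
        (∀ i, nb i ∈ 𝕄) → (∀ i, mb i ∈ 𝕄) → (∀ i j : Fin k, nb i < mb j) →
        dist (f nb) (f mb) ≤ ε

/-- Property 𝒬 for a Banach space: Property Q(ε, cε) holds for every ε > 0, for some c > 0. -/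
def PropertyQ (M : Type*) [PseudoMetricSpace M] : Prop :=
  ∃ c : ℝ, 0 < c ∧ ∀ ε : ℝ, 0 < ε → PropertyQED M ε (c * ε)

/-- If Y has Property 𝒬 and there is a uniformly continuous map φ : B_X → Y with
ρ̄_φ(t) > 0 for some t ∈ (0,1), then X has Property 𝒬. -/

lemma exists_enum_of_infinite (S : Set ℕ) (hS : S.Infinite) :
    ∃ e : ℕ → ℕ, StrictMono e ∧ Set.range e = S := by
  haveI := hS.to_subtype
  classical
  refine ⟨fun n => ((Nat.Subtype.orderIsoOfNat S n : S) : ℕ), ?_, ?_⟩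
  · intro a b h
    exact Subtype.coe_lt_coe.2 ((Nat.Subtype.orderIsoOfNat S).strictMono h)
  · ext x
    constructor
    · rintro ⟨n, rfl⟩
      exact (Nat.Subtype.orderIsoOfNat S n).2
    · intro hx
      obtain ⟨n, hn⟩ := (Nat.Subtype.orderIsoOfNat S).surjective ⟨x, hx⟩
      exact ⟨n, congrArg Subtype.val hn⟩

theorem ramseyTuples (B : ℕ) : ∀ (r : ℕ) (C : (Fin r → ℕ) → ℕ), (∀ w, C w ≤ B) →
    ∀ S : Set ℕ, S.Infinite →
    ∃ T : Set ℕ, T ⊆ S ∧ T.Infinite ∧ ∃ v, ∀ w : Fin r → ℕ,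
      StrictMono w → (∀ i, w i ∈ T) → C w = v := by
  intro r
  induction r with
  | zero =>
    intro C hB S hS
    refine ⟨S, subset_rfl, hS, C (fun i => i.elim0), fun w hw hwT => ?_⟩
    have hw0 : w = fun i => i.elim0 := funext fun i => i.elim0
    rw [hw0]
  | succ r IH =>
    intro C hB S hS
    -- one step of the construction
    have step : ∀ U : Set ℕ, U.Infinite → ∃ (a : ℕ) (T : Set ℕ) (v : ℕ),
        a ∈ U ∧ T ⊆ U ∧ T.Infinite ∧ (∀ x ∈ T, a < x) ∧ v ≤ B ∧
        ∀ w : Fin r → ℕ, StrictMono w → (∀ i, w i ∈ T) → C (Fin.cons a w) = v := by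
      intro U hU
      obtain ⟨a, ha⟩ := hU.nonempty
      have hU' : (U \ Set.Iic a).Infinite := hU.diff (Set.finite_Iic a)
      obtain ⟨T, hTsub, hTinf, v, hv⟩ :=
        IH (fun w => C (Fin.cons a w)) (fun w => hB _) _ hU'
      refine ⟨a, T, v, ha, fun x hx => (hTsub hx).1, hTinf,
        fun x hx => lt_of_not_ge (hTsub hx).2, ?_, hv⟩
      -- v ≤ B
      obtain ⟨e, he, hrange⟩ := exists_enum_of_infinite T hTinf
      have := hv (fun i => e i) (fun i j h => he h)
        (fun i => by rw [← hrange]; exact ⟨i, rfl⟩)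
      rw [← this]; exact hB _
    choose stepA stepT stepV hmem hsub hinf hgt hvB hmono using step
    -- the decreasing chain of infinite sets
    let next : (Σ' U : Set ℕ, U.Infinite) → (Σ' U : Set ℕ, U.Infinite) :=
      fun p => ⟨stepT p.1 p.2, hinf p.1 p.2⟩
    let chain : ℕ → Σ' U : Set ℕ, U.Infinite := fun n => next^[n] ⟨S, hS⟩
    have hchain_succ : ∀ n, chain (n + 1) = next (chain n) := by
      intro n; exact Function.iterate_succ_apply' next n ⟨S, hS⟩
    set a : ℕ → ℕ := fun n => stepA (chain n).1 (chain n).2 with ha_def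
    set v : ℕ → ℕ := fun n => stepV (chain n).1 (chain n).2 with hv_def
    have hchain_sub : ∀ n, (chain (n + 1)).1 ⊆ (chain n).1 := by
      intro n; rw [hchain_succ n]; exact hsub _ _
    have hchain_mono : ∀ m n, m ≤ n → (chain n).1 ⊆ (chain m).1 := by
      intro m n h
      induction n with
      | zero => cases Nat.le_zero.mp h; exact subset_rfl
      | succ n ih =>
        rcases Nat.lt_or_ge m (n+1) with h' | h'
        · exact (hchain_sub n).trans (ih (Nat.lt_succ_iff.mp h'))
        · cases le_antisymm h h'; exact subset_rfl
    have hchainS : ∀ n, (chain n).1 ⊆ S := fun n => hchain_mono 0 n (Nat.zero_le n)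
    have haS : ∀ n, a n ∈ (chain n).1 := fun n => hmem _ _
    have hlater : ∀ m n, m < n → a n ∈ (chain (m + 1)).1 := by
      intro m n h
      exact hchain_mono (m+1) n h (haS n)
    have hagt : ∀ m n, m < n → a m < a n := by
      intro m n h
      have : a n ∈ (chain (m+1)).1 := hlater m n h
      rw [hchain_succ m] at this
      exact hgt _ _ _ this
    have haSM : StrictMono a := fun m n h => hagt m n h
    -- pigeonhole on the colors
    have hfib : ∃ y : Fin (B + 1), (Set.Infinite {n : ℕ | v n = (y : ℕ)}) := by
      obtain ⟨y, hy⟩ := Finite.exists_infinite_fiber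
        (fun n => (⟨v n, Nat.lt_succ_of_le (hvB (chain n).1 (chain n).2)⟩ : Fin (B+1)))
      refine ⟨y, ?_⟩
      rw [Set.infinite_coe_iff] at hy
      refine hy.mono ?_
      intro n hn
      simp only [Set.mem_preimage, Set.mem_singleton_iff] at hn
      have := congrArg Fin.val hn
      simpa using this
    obtain ⟨y, hy⟩ := hfib
    refine ⟨a '' {n | v n = (y : ℕ)}, ?_, hy.image (Set.injOn_of_injective haSM.injective),
      (y : ℕ), ?_⟩
    · rintro x ⟨n, _, rfl⟩
      exact hchainS n (haS n)
    · intro w hw hwT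
      choose idx hidxv hidxa using hwT
      have hidxmono : StrictMono idx := by
        intro i j h
        have : a (idx i) < a (idx j) := by rw [hidxa i, hidxa j]; exact hw h
        exact haSM.lt_iff_lt.mp this
      have htail : ∀ i : Fin r, Fin.tail w i ∈ (chain (idx 0 + 1)).1 := by
        intro i
        have h0i : idx 0 < idx i.succ := hidxmono (Fin.succ_pos i)
        have := hlater (idx 0) (idx i.succ) h0i
        rw [hidxa i.succ] at this
        exact this
      have htailSM : StrictMono (Fin.tail w) := by
        intro i j h
        exact hw (Fin.succ_lt_succ_iff.mpr h)
      have key := hmono (chain (idx 0)).1 (chain (idx 0)).2 (Fin.tail w) htailSM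
        (by intro i; have := htail i; rw [hchain_succ (idx 0)] at this; exact this)
      have hcons : Fin.cons (a (idx 0)) (Fin.tail w) = w := by
        rw [hidxa 0]
        exact Fin.cons_self_tail w
      rw [hcons] at key
      rw [key]
      exact hidxv 0

lemma dist_le_of_separated {M : Type*} [PseudoMetricSpace M] {k : ℕ}
    (f : (Fin k → ℕ) → M) (δ : ℝ)
    (Hf : ∀ nb mb : Fin k → ℕ, StrictMono nb → StrictMono mb → Interlace nb mb →
      dist (f nb) (f mb) ≤ δ)
    (ab bb : Fin k → ℕ) (hai : StrictMono ab) (hbi : StrictMono bb)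
    (hsep : ∀ i j, ab i < bb j) :
    dist (f ab) (f bb) ≤ k * δ := by
  rcases Nat.eq_zero_or_pos k with hk | hk
  · subst hk
    have : ab = bb := funext fun i => i.elim0
    rw [this, dist_self]
    norm_num
  -- merged sequence
  set s : ℕ → ℕ := fun p => if h : p < k then ab ⟨p, h⟩ else bb ⟨(p - k) % k, Nat.mod_lt _ hk⟩
    with hs_def
  have hsSM : ∀ p p', p < p' → p' < k + k → s p < s p' := by
    intro p p' hpp hp'
    simp only [hs_def]
    by_cases h1 : p < k <;> by_cases h2 : p' < k <;> simp only [h1, h2, dif_pos, dif_neg,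
      not_false_iff, dite_true, dite_false]
    · exact hai (by exact hpp)
    · exact hsep _ _
    · omega
    · have e1 : (p - k) % k = p - k := Nat.mod_eq_of_lt (by omega)
      have e2 : (p' - k) % k = p' - k := Nat.mod_eq_of_lt (by omega)
      exact hbi (by simp only [Fin.mk_lt_mk]; omega)
  set q : ℕ → (Fin k → ℕ) := fun j i => s (j + i) with hq_def
  have hq0 : q 0 = ab := by
    funext i
    simp only [hq_def, hs_def, Nat.zero_add, i.isLt, dif_pos]
  have hqk : q k = bb := by
    funext i
    have h1 : ¬ (k + (i : ℕ) < k) := by omega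
    have h2 : (k + (i : ℕ) - k) % k = (i : ℕ) := by
      rw [Nat.add_sub_cancel_left, Nat.mod_eq_of_lt i.isLt]
    simp only [hq_def, hs_def, h1, dif_neg, not_false_iff, h2]
  have hqSM : ∀ j, j ≤ k → StrictMono (q j) := by
    intro j hj i i' hii
    exact hsSM _ _ (by omega) (by omega)
  have hstep : ∀ j, j + 1 ≤ k → dist (f (q j)) (f (q (j + 1))) ≤ δ := by
    intro j hj
    refine Hf _ _ (hqSM j (by omega)) (hqSM (j+1) hj) (Or.inl ⟨?_, ?_⟩)
    · intro i
      exact le_of_lt (hsSM _ _ (by omega) (by omega))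
    · intro i i' hii
      refine le_of_eq ?_
      simp only [hq_def]
      congr 1
      omega
  have hchain : ∀ j, j ≤ k → dist (f (q 0)) (f (q j)) ≤ j * δ := by
    intro j
    induction j with
    | zero => intro _; simp
    | succ j ih =>
      intro hj
      calc dist (f (q 0)) (f (q (j+1)))
          ≤ dist (f (q 0)) (f (q j)) + dist (f (q j)) (f (q (j+1))) := dist_triangle _ _ _
        _ ≤ j * δ + δ := add_le_add (ih (by omega)) (hstep j hj)
        _ = (j + 1 : ℕ) * δ := by push_cast; ring
  have := hchain k le_rfl
  rwa [hq0, hqk] at this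

section DetectorSection


variable {X Y : Type*} [NormedAddCommGroup X] [NormedSpace ℝ X]
  [NormedAddCommGroup Y] [NormedSpace ℝ Y]

noncomputable def ballRetract (x : X) : Metric.closedBall (0:X) 1 :=
  if h : ‖x‖ ≤ 1 then ⟨x, by simpa [Metric.mem_closedBall, dist_zero_right] using h⟩
  else ⟨‖x‖⁻¹ • x, by
    have hx : ‖x‖ > 1 := lt_of_not_ge h
    have hx0 : ‖x‖ ≠ 0 := by positivity
    simp only [Metric.mem_closedBall, dist_zero_right, norm_smul, norm_inv, Real.norm_eq_abs,
      abs_of_nonneg (norm_nonneg x)]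
    rw [inv_mul_cancel₀ hx0]⟩

lemma ballRetract_of_le (x : X) (h : ‖x‖ ≤ 1) : (ballRetract x : X) = x := by
  simp [ballRetract, h]

lemma ballRetract_lip (x y : X) :
    dist (ballRetract x) (ballRetract y) ≤ 2 * dist x y := by
  have key : ∀ a b : X, ‖a‖ ≤ 1 → 1 < ‖b‖ →
      dist a (‖b‖⁻¹ • b) ≤ 2 * dist a b := by
    intro a b ha hb
    have hb0 : ‖b‖ ≠ 0 := by positivity
    have h1 : dist b (‖b‖⁻¹ • b) = ‖b‖ - 1 := by
      rw [dist_eq_norm]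
      have : b - ‖b‖⁻¹ • b = (1 - ‖b‖⁻¹) • b := by
        rw [sub_smul, one_smul]
      rw [this, norm_smul, Real.norm_eq_abs, abs_of_nonneg, sub_mul, one_mul,
        inv_mul_cancel₀ hb0]
      · have : (0:ℝ) < ‖b‖⁻¹ := by positivity
        have h2 : ‖b‖⁻¹ < 1 := by
          rw [inv_lt_one_iff₀]; right; exact hb
        linarith
    have h2 : ‖b‖ - 1 ≤ dist a b := by
      have := norm_sub_norm_le b a
      rw [← dist_eq_norm, dist_comm] at this
      linarith
    calc dist a (‖b‖⁻¹ • b) ≤ dist a b + dist b (‖b‖⁻¹ • b) := dist_triangle _ _ _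
      _ ≤ 2 * dist a b := by rw [h1]; linarith
  have key2 : ∀ a b : X, 1 < ‖a‖ → 1 < ‖b‖ →
      dist (‖a‖⁻¹ • a) (‖b‖⁻¹ • b) ≤ 2 * dist a b := by
    intro a b ha hb
    have ha0 : (0:ℝ) < ‖a‖ := by linarith
    have hb0 : (0:ℝ) < ‖b‖ := by linarith
    have step1 : dist (‖a‖⁻¹ • a) (‖a‖⁻¹ • b) = ‖a‖⁻¹ * dist a b := by
      rw [dist_smul₀, Real.norm_eq_abs, abs_of_pos (by positivity)]
    have habs : |‖a‖⁻¹ - ‖b‖⁻¹| = |‖b‖ - ‖a‖| / (‖a‖ * ‖b‖) := by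
      rw [inv_sub_inv (ne_of_gt ha0) (ne_of_gt hb0), abs_div,
        abs_of_pos (mul_pos ha0 hb0)]
    have step2 : dist (‖a‖⁻¹ • b) (‖b‖⁻¹ • b) = ‖a‖⁻¹ * |‖b‖ - ‖a‖| := by
      rw [dist_eq_norm, ← sub_smul, norm_smul, Real.norm_eq_abs, habs]
      field_simp
    have h3 : |‖b‖ - ‖a‖| ≤ dist a b := abs_norm_sub_norm_le b a |>.trans (by
      rw [← dist_eq_norm, dist_comm])
    have h4 : ‖a‖⁻¹ ≤ 1 := by
      rw [inv_le_one_iff₀]; right; linarith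
    calc dist (‖a‖⁻¹ • a) (‖b‖⁻¹ • b)
        ≤ dist (‖a‖⁻¹ • a) (‖a‖⁻¹ • b) + dist (‖a‖⁻¹ • b) (‖b‖⁻¹ • b) := dist_triangle _ _ _
      _ = ‖a‖⁻¹ * dist a b + ‖a‖⁻¹ * |‖b‖ - ‖a‖| := by rw [step1, step2]
      _ ≤ 1 * dist a b + 1 * dist a b := by
          have e1 : ‖a‖⁻¹ * dist a b ≤ 1 * dist a b :=
            mul_le_mul_of_nonneg_right h4 dist_nonneg
          have e2 : ‖a‖⁻¹ * |‖b‖ - ‖a‖| ≤ 1 * dist a b := by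
            calc ‖a‖⁻¹ * |‖b‖ - ‖a‖| ≤ 1 * |‖b‖ - ‖a‖| :=
                  mul_le_mul_of_nonneg_right h4 (abs_nonneg _)
              _ ≤ 1 * dist a b := by rw [one_mul, one_mul]; exact h3
          linarith
      _ = 2 * dist a b := by ring
  rw [Subtype.dist_eq]
  unfold ballRetract
  by_cases hx : ‖x‖ ≤ 1 <;> by_cases hy : ‖y‖ ≤ 1 <;>
    simp only [hx, hy, dif_pos, dif_neg, not_false_iff]
  · linarith [dist_nonneg (x := x) (y := y)]
  · exact key x y hx (lt_of_not_ge hy)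
  · rw [dist_comm]
    rw [dist_comm x y]
    exact key y x hy (lt_of_not_ge hx)
  · exact key2 x y (lt_of_not_ge hx) (lt_of_not_ge hy)

lemma detector (φ : Metric.closedBall (0:X) 1 → Y) (hφ : UniformContinuous φ)
    {t ρ : ℝ} (ht0 : 0 < t) (ht1 : t < 1) (hρ : 0 < ρ)
    (hcomp : ∀ u v : Metric.closedBall (0:X) 1, dist u v = t → ρ ≤ dist (φ u) (φ v))
    (n : ℕ) :
    ∃ (g : X → Y) (R : ℝ), 0 < R ∧
      (∀ x y : X, dist x y ≤ 1 → dist (g x) (g y) ≤ 1) ∧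
      (∀ x y : X, ‖x‖ ≤ R + 2 → ‖y‖ ≤ R + 2 → dist x y ∈ Set.Icc R (R + 2) →
        (n : ℝ) < dist (g x) (g y)) := by
  set K : ℝ := 2 * ((n : ℝ) + 1) / ρ with hK_def
  have hKpos : 0 < K := by positivity
  obtain ⟨δ₁, hδ₁pos, hδ₁⟩ := Metric.uniformContinuous_iff.mp hφ (1 / K) (by positivity)
  obtain ⟨δ₀, hδ₀pos, hδ₀⟩ := Metric.uniformContinuous_iff.mp hφ (ρ / 4) (by positivity)
  set R : ℝ := 1 + max 0 (max (2 / δ₁) (max (2 / δ₀) (2 / (1 - t)))) with hR_def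
  have hRpos : (0:ℝ) < R := by
    rw [hR_def]
    have := le_max_left (0:ℝ) (max (2 / δ₁) (max (2 / δ₀) (2 / (1 - t))))
    linarith
  have hR1 : 2 / δ₁ < R + 2 := by
    have h1 := le_max_left (2/δ₁) (max (2 / δ₀) (2 / (1 - t)))
    have h2 := le_max_right (0:ℝ) (max (2 / δ₁) (max (2 / δ₀) (2 / (1 - t))))
    have := le_trans h1 h2
    simp only [hR_def]; linarith
  have hR0 : 2 / δ₀ < R + 2 := by
    have h1 := le_max_left (2/δ₀) (2 / (1 - t))
    have h2 := le_max_right (2/δ₁) (max (2 / δ₀) (2 / (1 - t)))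
    have h3 := le_max_right (0:ℝ) (max (2 / δ₁) (max (2 / δ₀) (2 / (1 - t))))
    have := le_trans (le_trans h1 h2) h3
    simp only [hR_def]; linarith
  have hRt : 2 / (1 - t) < R + 2 := by
    have h1 := le_max_right (2/δ₀) (2 / (1 - t))
    have h2 := le_max_right (2/δ₁) (max (2 / δ₀) (2 / (1 - t)))
    have h3 := le_max_right (0:ℝ) (max (2 / δ₁) (max (2 / δ₀) (2 / (1 - t))))
    have := le_trans (le_trans h1 h2) h3
    simp only [hR_def]; linarith
  set M : ℝ := (R + 2) / t with hM_def
  have hMpos : 0 < M := by positivity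
  have hMge : R + 2 ≤ M * 1 := by
    rw [mul_one, hM_def]
    rw [le_div_iff₀ ht0]
    nlinarith
  have hMR2 : M * t = R + 2 := by
    rw [hM_def]; field_simp
  -- the map
  set g : X → Y := fun x => K • φ (ballRetract (M⁻¹ • x)) with hg_def
  have hgdist : ∀ x y : X, dist (g x) (g y)
      = K * dist (φ (ballRetract (M⁻¹ • x))) (φ (ballRetract (M⁻¹ • y))) := by
    intro x y
    simp only [hg_def]
    rw [dist_smul₀, Real.norm_eq_abs, abs_of_pos hKpos]
  have hscaledist : ∀ x y : X, dist (M⁻¹ • x) (M⁻¹ • y) = M⁻¹ * dist x y := by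
    intro x y
    rw [dist_smul₀, Real.norm_eq_abs, abs_of_pos (by positivity)]
  refine ⟨g, R, hRpos, ?_, ?_⟩
  · -- coarse at scale 1
    intro x y hxy
    rw [hgdist]
    have h1 : dist (ballRetract (M⁻¹ • x)) (ballRetract (M⁻¹ • y))
        ≤ 2 * (M⁻¹ * dist x y) := by
      rw [← hscaledist]; exact ballRetract_lip _ _
    have h2 : 2 * (M⁻¹ * dist x y) < δ₁ := by
      have hd : 2 * (M⁻¹ * dist x y) ≤ 2 * M⁻¹ := by
        have : M⁻¹ * dist x y ≤ M⁻¹ * 1 := by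
          apply mul_le_mul_of_nonneg_left hxy (by positivity)
        linarith
      have : 2 * M⁻¹ < δ₁ := by
        rw [div_lt_iff₀ hδ₁pos] at hR1
        have h2M : 2 < δ₁ * M := by
          calc 2 < δ₁ * (R+2) := by linarith [hR1]
            _ ≤ δ₁ * M := by
                apply mul_le_mul_of_nonneg_left (by linarith [hMge]) (le_of_lt hδ₁pos)
        rw [mul_comm] at h2M
        calc 2 * M⁻¹ = 2 / M := by rw [div_eq_mul_inv]
          _ < δ₁ := by rw [div_lt_iff₀ hMpos]; linarith
      linarith
    have h3 := hδ₁ (lt_of_le_of_lt h1 h2)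
    have h4 : K * dist (φ (ballRetract (M⁻¹ • x))) (φ (ballRetract (M⁻¹ • y)))
        ≤ K * (1 / K) := mul_le_mul_of_nonneg_left (le_of_lt h3) (le_of_lt hKpos)
    rw [mul_one_div, div_self (ne_of_gt hKpos)] at h4
    exact h4
  · -- the detection window
    intro x y hx hy hwin
    obtain ⟨hwl, hwr⟩ := hwin
    set u : X := M⁻¹ • x with hu_def
    set v : X := M⁻¹ • y with hv_def
    have hnu : ‖u‖ ≤ t := by
      rw [hu_def, norm_smul, Real.norm_eq_abs, abs_of_pos (by positivity)]
      rw [inv_mul_le_iff₀ hMpos, hM_def]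
      calc ‖x‖ ≤ R + 2 := hx
        _ = (R+2)/t * t := by rw [div_mul_cancel₀ _ (ne_of_gt ht0)]
    have hnv : ‖v‖ ≤ t := by
      rw [hv_def, norm_smul, Real.norm_eq_abs, abs_of_pos (by positivity)]
      rw [inv_mul_le_iff₀ hMpos, hM_def]
      calc ‖y‖ ≤ R + 2 := hy
        _ = (R+2)/t * t := by rw [div_mul_cancel₀ _ (ne_of_gt ht0)]
    have hnu1 : ‖u‖ ≤ 1 := le_trans hnu (le_of_lt ht1)
    have hnv1 : ‖v‖ ≤ 1 := le_trans hnv (le_of_lt ht1)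
    set d : ℝ := dist u v with hd_def
    have hduv : d = M⁻¹ * dist x y := by rw [hd_def, hu_def, hv_def, hscaledist]
    have hdle : d ≤ t := by
      rw [hduv]
      rw [inv_mul_le_iff₀ hMpos, hMR2]
      exact hwr
    have hdge : R / M ≤ d := by
      rw [hduv, div_eq_inv_mul]
      exact mul_le_mul_of_nonneg_left hwl (by positivity)
    have hdpos : 0 < d := lt_of_lt_of_le (by positivity) hdge
    -- the auxiliary point at distance exactly t from u
    set v' : X := u + (t / d) • (v - u) with hv'_def
    have htd : 0 < t / d := by positivity
    have huv'eq : u - v' = (t / d) • (u - v) := by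
      simp only [hv'_def, smul_sub]
      abel
    have hdistuv' : dist u v' = t := by
      rw [dist_eq_norm, huv'eq, norm_smul, Real.norm_eq_abs, abs_of_pos htd, ← dist_eq_norm,
        ← hd_def]
      field_simp
    have hvv'eq : v - v' = (1 - t / d) • (v - u) := by
      simp only [hv'_def, sub_smul, smul_sub, one_smul]
      abel
    have htdge1 : 1 ≤ t / d := (one_le_div hdpos).mpr hdle
    have hdistvv' : dist v v' = t - d := by
      rw [dist_eq_norm, hvv'eq, norm_smul, Real.norm_eq_abs, abs_of_nonpos (by linarith),
        ← dist_eq_norm, dist_comm v u, ← hd_def]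
      have hd0 : d ≠ 0 := ne_of_gt hdpos
      field_simp
      ring
    have hRM : R / M = R * t / (R + 2) := by
      rw [hM_def]
      rw [div_div_eq_mul_div]
    have h2R : t - d ≤ 2 / (R + 2) := by
      have h1 : R * t / (R + 2) ≤ d := hRM ▸ hdge
      have h2 : t - R * t / (R + 2) = 2 * t / (R + 2) := by
        field_simp
        ring
      have h3 : 2 * t / (R + 2) ≤ 2 / (R + 2) := by
        gcongr
        linarith
      linarith
    have hR0' : 2 / (R + 2) < δ₀ := by
      rw [div_lt_iff₀ hδ₀pos] at hR0
      rw [div_lt_iff₀ (by positivity)]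
      linarith
    have hRt' : 2 / (R + 2) < 1 - t := by
      have h1t : 0 < 1 - t := by linarith
      rw [div_lt_iff₀ h1t] at hRt
      rw [div_lt_iff₀ (by positivity)]
      linarith
    have hnv' : ‖v'‖ ≤ 1 := by
      have h1 : ‖v'‖ ≤ ‖v‖ + dist v v' := by
        rw [dist_eq_norm]
        have hvv : v' = v - (v - v') := by abel
        calc ‖v'‖ = ‖v - (v - v')‖ := by rw [← hvv]
          _ ≤ ‖v‖ + ‖v - v'‖ := norm_sub_le _ _
      rw [hdistvv'] at h1
      calc ‖v'‖ ≤ ‖v‖ + (t - d) := h1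
        _ ≤ t + 2 / (R + 2) := by linarith
        _ ≤ t + (1 - t) := by linarith
        _ = 1 := by ring
    have humem : u ∈ Metric.closedBall (0:X) 1 := by
      rw [Metric.mem_closedBall, dist_zero_right]; exact hnu1
    have hvmem : v ∈ Metric.closedBall (0:X) 1 := by
      rw [Metric.mem_closedBall, dist_zero_right]; exact hnv1
    have hv'mem : v' ∈ Metric.closedBall (0:X) 1 := by
      rw [Metric.mem_closedBall, dist_zero_right]; exact hnv'
    set U : Metric.closedBall (0:X) 1 := ⟨u, humem⟩ with hU_def
    set V : Metric.closedBall (0:X) 1 := ⟨v, hvmem⟩ with hV_def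
    set V' : Metric.closedBall (0:X) 1 := ⟨v', hv'mem⟩ with hV'_def
    have hφUV' : ρ ≤ dist (φ U) (φ V') := hcomp U V' (by rw [Subtype.dist_eq]; exact hdistuv')
    have hVV' : dist V V' < δ₀ := by
      rw [Subtype.dist_eq]
      show dist v v' < δ₀
      rw [hdistvv']
      linarith
    have hφVV' : dist (φ V) (φ V') < ρ / 4 := hδ₀ hVV'
    have hφUV : ρ / 2 ≤ dist (φ U) (φ V) := by
      have htri := dist_triangle (φ U) (φ V) (φ V')
      linarith
    rw [hgdist]
    have hbu : ballRetract (M⁻¹ • x) = U := by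
      rw [← hu_def]
      exact Subtype.ext (ballRetract_of_le u hnu1)
    have hbv : ballRetract (M⁻¹ • y) = V := by
      rw [← hv_def]
      exact Subtype.ext (ballRetract_of_le v hnv1)
    rw [hbu, hbv]
    have hmul : K * (ρ / 2) ≤ K * dist (φ U) (φ V) :=
      mul_le_mul_of_nonneg_left hφUV (le_of_lt hKpos)
    have hKρ : K * (ρ / 2) = (n : ℝ) + 1 := by
      rw [hK_def]
      field_simp
    linarith

end DetectorSection

lemma strictMono_append {k : ℕ} {a b : Fin k → ℕ} (ha : StrictMono a) (hb : StrictMono b)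
    (hsep : ∀ i j, a i < b j) : StrictMono (Fin.append a b) := by
  intro i j hij
  have hij' : (i : ℕ) < (j : ℕ) := hij
  rcases lt_or_ge (i : ℕ) k with hi | hi <;> rcases lt_or_ge (j : ℕ) k with hj | hj
  · have e1 : i = Fin.castAdd k ⟨(i : ℕ), hi⟩ := Fin.ext (by simp only [Fin.coe_castAdd])
    have e2 : j = Fin.castAdd k ⟨(j : ℕ), hj⟩ := Fin.ext (by simp only [Fin.coe_castAdd])
    rw [e1, e2, Fin.append_left, Fin.append_left]
    exact ha (by simp only [Fin.mk_lt_mk]; exact hij')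
  · have e1 : i = Fin.castAdd k ⟨(i : ℕ), hi⟩ := Fin.ext (by simp only [Fin.coe_castAdd])
    have e2 : j = Fin.natAdd k ⟨(j : ℕ) - k, by omega⟩ := Fin.ext (by simp only [Fin.coe_natAdd]; omega)
    rw [e1, e2, Fin.append_left, Fin.append_right]
    exact hsep _ _
  · omega
  · have e1 : i = Fin.natAdd k ⟨(i : ℕ) - k, by omega⟩ := Fin.ext (by simp only [Fin.coe_natAdd]; omega)
    have e2 : j = Fin.natAdd k ⟨(j : ℕ) - k, by omega⟩ := Fin.ext (by simp only [Fin.coe_natAdd]; omega)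
    rw [e1, e2]
    simp only [Fin.append_right]
    exact hb (by simp only [Fin.mk_lt_mk]; omega)

lemma propertyQED_relativize {M : Type*} [PseudoMetricSpace M] {ε δ : ℝ}
    (h : PropertyQED M ε δ) (S : Set ℕ) (hS : S.Infinite) (k : ℕ)
    (f : (Fin k → ℕ) → M)
    (hf : ∀ nb mb : Fin k → ℕ, StrictMono nb → StrictMono mb → Interlace nb mb →
      dist (f nb) (f mb) ≤ δ) :
    ∃ T : Set ℕ, T ⊆ S ∧ T.Infinite ∧
      ∀ nb mb : Fin k → ℕ, StrictMono nb → StrictMono mb →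
        (∀ i, nb i ∈ T) → (∀ i, mb i ∈ T) → (∀ i j : Fin k, nb i < mb j) →
        dist (f nb) (f mb) ≤ ε := by
  obtain ⟨e, he, hrange⟩ := exists_enum_of_infinite S hS
  set g : (Fin k → ℕ) → M := fun nb => f (e ∘ nb) with hg_def
  have hg : ∀ nb mb : Fin k → ℕ, StrictMono nb → StrictMono mb → Interlace nb mb →
      dist (g nb) (g mb) ≤ δ := by
    intro nb mb hn hm hint
    apply hf _ _ (he.comp hn) (he.comp hm)
    rcases hint with ⟨h1, h2⟩ | ⟨h1, h2⟩
    · exact Or.inl ⟨fun i => he.monotone (h1 i), fun i j hij => he.monotone (h2 i j hij)⟩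
    · exact Or.inr ⟨fun i => he.monotone (h1 i), fun i j hij => he.monotone (h2 i j hij)⟩
  obtain ⟨T', hT'inf, hT'⟩ := h k g hg
  refine ⟨e '' T', ?_, hT'inf.image (Set.injOn_of_injective he.injective), ?_⟩
  · rintro x ⟨m, _, rfl⟩
    rw [← hrange]
    exact ⟨m, rfl⟩
  · intro nb mb hn hm hnT hmT hsep
    choose pn hpnT hpn using hnT
    choose pm hpmT hpm using hmT
    have hpnSM : StrictMono pn := by
      intro i j hij
      have : e (pn i) < e (pn j) := by rw [hpn i, hpn j]; exact hn hij
      exact he.lt_iff_lt.mp this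
    have hpmSM : StrictMono pm := by
      intro i j hij
      have : e (pm i) < e (pm j) := by rw [hpm i, hpm j]; exact hm hij
      exact he.lt_iff_lt.mp this
    have hsep' : ∀ i j, pn i < pm j := by
      intro i j
      have : e (pn i) < e (pm j) := by rw [hpn i, hpm j]; exact hsep i j
      exact he.lt_iff_lt.mp this
    have key := hT' pn pm hpnSM hpmSM hpnT hpmT hsep'
    have hgn : g pn = f nb := by
      simp only [hg_def]
      congr 1
      funext i
      exact hpn i
    have hgm : g pm = f mb := by
      simp only [hg_def]
      congr 1
      funext i
      exact hpm i
    rwa [hgn, hgm] at key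

lemma main_QED {X Y : Type*} [NormedAddCommGroup X] [NormedSpace ℝ X]
    [NormedAddCommGroup Y] [NormedSpace ℝ Y]
    (hY : PropertyQ Y) (φ : Metric.closedBall (0 : X) 1 → Y)
    (hφ : UniformContinuous φ)
    (ht : ∃ t ∈ Set.Ioo (0 : ℝ) 1, 0 < exactComp φ t) :
    ∃ ε₀ : ℝ, 0 < ε₀ ∧ PropertyQED X ε₀ 1 := by
  obtain ⟨t, ⟨ht0, ht1⟩, hρpos⟩ := ht
  set ρ := exactComp φ t with hρ_def
  have hcomp : ∀ u v : Metric.closedBall (0:X) 1, dist u v = t →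
      ρ ≤ dist (φ u) (φ v) := by
    intro u v huv
    have hbdd : BddBelow {r : ℝ | ∃ x y : Metric.closedBall (0:X) 1,
        dist x y = t ∧ dist (φ x) (φ y) = r} := by
      refine ⟨0, ?_⟩
      rintro r ⟨x, y, _, rfl⟩
      exact dist_nonneg
    exact csInf_le hbdd ⟨u, v, huv, rfl⟩
  obtain ⟨cY, hcY, hQY⟩ := hY
  set εY : ℝ := max (1 / cY) 1 with hεY_def
  have hεYpos : 0 < εY := lt_of_lt_of_le one_pos (le_max_right _ _)
  have hεY1 : (1:ℝ) ≤ cY * εY := by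
    have h1 : cY * (1 / cY) ≤ cY * εY :=
      mul_le_mul_of_nonneg_left (le_max_left _ _) (le_of_lt hcY)
    rw [mul_one_div, div_self (ne_of_gt hcY)] at h1
    exact h1
  have hQ := hQY εY hεYpos
  set n₂ : ℕ := ⌊εY⌋₊ + 1 with hn₂_def
  have hn₂gt : εY < (n₂ : ℕ) := by
    rw [hn₂_def]
    push_cast
    exact Nat.lt_floor_add_one εY
  obtain ⟨g, R, hRpos, hga, hgb⟩ := detector φ hφ ht0 ht1 hρpos hcomp n₂
  refine ⟨R + 3, by linarith, ?_⟩
  intro k f Hf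
  -- Ramsey stabilization of separated distances
  set C : (Fin (k + k) → ℕ) → ℕ := fun w =>
    min (⌊dist (f (fun i : Fin k => w (Fin.castAdd k i)))
      (f (fun i : Fin k => w (Fin.natAdd k i)))⌋₊) k with hC_def
  have hCB : ∀ w, C w ≤ k := fun w => min_le_right _ _
  obtain ⟨𝕄₁, _, h𝕄₁inf, v, hmono1⟩ :=
    ramseyTuples k (k + k) C hCB Set.univ Set.infinite_univ
  have hstab : ∀ ab bb : Fin k → ℕ, StrictMono ab → StrictMono bb →
      (∀ i, ab i ∈ 𝕄₁) → (∀ i, bb i ∈ 𝕄₁) → (∀ i j, ab i < bb j) →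
      (v : ℝ) ≤ dist (f ab) (f bb) ∧ dist (f ab) (f bb) < v + 1 := by
    intro ab bb hai hbi haM hbM hsep
    set w := Fin.append ab bb with hw_def
    have hwSM : StrictMono w := strictMono_append hai hbi hsep
    have hwM : ∀ i, w i ∈ 𝕄₁ := by
      intro i
      rcases lt_or_ge (i : ℕ) (k) with hi | hi
      · have e1 : i = Fin.castAdd k ⟨(i : ℕ), hi⟩ := Fin.ext (by simp only [Fin.coe_castAdd])
        rw [e1, hw_def, Fin.append_left]
        exact haM _
      · have e1 : i = Fin.natAdd k ⟨(i : ℕ) - k, by omega⟩ := Fin.ext (by simp only [Fin.coe_natAdd]; omega)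
        rw [e1, hw_def, Fin.append_right]
        exact hbM _
    have hCw := hmono1 w hwSM hwM
    have hleft : (fun i : Fin k => w (Fin.castAdd k i)) = ab := by
      funext i
      rw [hw_def, Fin.append_left]
    have hright : (fun i : Fin k => w (Fin.natAdd k i)) = bb := by
      funext i
      rw [hw_def, Fin.append_right]
    have hdiam : dist (f ab) (f bb) ≤ (k : ℝ) := by
      have := dist_le_of_separated f 1 Hf ab bb hai hbi hsep
      simpa using this
    have hfloorle : ⌊dist (f ab) (f bb)⌋₊ ≤ k := by
      calc ⌊dist (f ab) (f bb)⌋₊ ≤ ⌊(k:ℝ)⌋₊ := Nat.floor_le_floor hdiam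
        _ = k := Nat.floor_natCast k
    have hCw' : ⌊dist (f ab) (f bb)⌋₊ = v := by
      rw [hC_def] at hCw
      simp only [hleft, hright] at hCw
      rw [min_eq_left hfloorle] at hCw
      exact hCw
    constructor
    · rw [← hCw']
      exact Nat.floor_le dist_nonneg
    · have hlt := Nat.lt_floor_add_one (dist (f ab) (f bb))
      rw [hCw'] at hlt
      exact_mod_cast hlt
  by_cases hv : (v : ℝ) ≤ R + 1
  · refine ⟨𝕄₁, h𝕄₁inf, ?_⟩
    intro nb mb hn hm hnM hmM hsep
    have := (hstab nb mb hn hm hnM hmM hsep).2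
    linarith
  · push_neg at hv
    exfalso
    have hvpos : (0:ℝ) < v := by linarith
    obtain ⟨e₁, he₁, hrange₁⟩ := exists_enum_of_infinite 𝕄₁ h𝕄₁inf
    set b0 : Fin k → ℕ := fun i => e₁ i with hb0_def
    have hb0SM : StrictMono b0 := fun i j hij => he₁ hij
    have hb0M : ∀ i, b0 i ∈ 𝕄₁ := fun i => by rw [← hrange₁]; exact ⟨i, rfl⟩
    set S' : Set ℕ := 𝕄₁ \ Set.Iic (e₁ k) with hS'_def
    have hS'inf : S'.Infinite := h𝕄₁inf.diff (Set.finite_Iic _)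
    have hS'sub : S' ⊆ 𝕄₁ := Set.diff_subset
    have hS'gt : ∀ m ∈ S', e₁ k < m := by
      intro m hm
      have := hm.2
      simp only [Set.mem_Iic, not_le] at this
      exact this
    set lam : ℝ := (R + 1) / v with hlam_def
    have hlampos : 0 < lam := by positivity
    have hlamlt : lam < 1 := by rw [hlam_def, div_lt_one hvpos]; linarith
    have hlamv : lam * v = R + 1 := by rw [hlam_def]; exact div_mul_cancel₀ _ (ne_of_gt hvpos)
    set hh : (Fin k → ℕ) → X := fun nb => lam • (f nb - f b0) with hh_def
    have hhdist : ∀ nb mb, dist (hh nb) (hh mb) = lam * dist (f nb) (f mb) := by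
      intro nb mb
      simp only [hh_def]
      rw [dist_smul₀, dist_sub_right, Real.norm_eq_abs, abs_of_pos hlampos]
    have hhnorm : ∀ nb, ‖hh nb‖ = lam * dist (f nb) (f b0) := by
      intro nb
      simp only [hh_def]
      rw [norm_smul, Real.norm_eq_abs, abs_of_pos hlampos, ← dist_eq_norm]
    set ψ : (Fin k → ℕ) → Y := fun nb => g (hh nb) with hψ_def
    have hψint : ∀ nb mb : Fin k → ℕ, StrictMono nb → StrictMono mb → Interlace nb mb →
        dist (ψ nb) (ψ mb) ≤ cY * εY := by
      intro nb mb hn hm hint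
      have h1 : dist (hh nb) (hh mb) ≤ 1 := by
        rw [hhdist]
        have h2 := Hf nb mb hn hm hint
        nlinarith [dist_nonneg (x := f nb) (y := f mb)]
      exact le_trans (hga _ _ h1) hεY1
    obtain ⟨𝕄₂, h𝕄₂sub, h𝕄₂inf, h𝕄₂⟩ := propertyQED_relativize hQ S' hS'inf k ψ hψint
    obtain ⟨e₂, he₂, hrange₂⟩ := exists_enum_of_infinite 𝕄₂ h𝕄₂inf
    set ab : Fin k → ℕ := fun i => e₂ (i : ℕ) with hab_def
    set bb : Fin k → ℕ := fun i => e₂ (k + (i : ℕ)) with hbb_def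
    have habSM : StrictMono ab := fun i j hij => he₂ hij
    have hbbSM : StrictMono bb := by
      intro i j hij
      have : (i:ℕ) < (j:ℕ) := hij
      exact he₂ (by omega)
    have habM2 : ∀ i, ab i ∈ 𝕄₂ := fun i => by rw [← hrange₂]; exact ⟨i, rfl⟩
    have hbbM2 : ∀ i, bb i ∈ 𝕄₂ := fun i => by rw [← hrange₂]; exact ⟨k + i, rfl⟩
    have habM1 : ∀ i, ab i ∈ 𝕄₁ := fun i => hS'sub (h𝕄₂sub (habM2 i))
    have hbbM1 : ∀ i, bb i ∈ 𝕄₁ := fun i => hS'sub (h𝕄₂sub (hbbM2 i))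
    have hsepab : ∀ i j, ab i < bb j := by
      intro i j
      have hik : (i:ℕ) < k := i.isLt
      exact he₂ (by omega)
    have hsepb0a : ∀ i j, b0 i < ab j := by
      intro i j
      have h1 : e₁ (i : ℕ) < e₁ k := he₁ i.isLt
      exact lt_trans h1 (hS'gt _ (h𝕄₂sub (habM2 j)))
    have hsepb0b : ∀ i j, b0 i < bb j := by
      intro i j
      have h1 : e₁ (i : ℕ) < e₁ k := he₁ i.isLt
      exact lt_trans h1 (hS'gt _ (h𝕄₂sub (hbbM2 j)))
    obtain ⟨hA1, hA2⟩ := hstab b0 ab hb0SM habSM hb0M habM1 hsepb0a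
    obtain ⟨hB1, hB2⟩ := hstab b0 bb hb0SM hbbSM hb0M hbbM1 hsepb0b
    obtain ⟨hAB1, hAB2⟩ := hstab ab bb habSM hbbSM habM1 hbbM1 hsepab
    have hexp : lam * ((v:ℝ) + 1) = (R + 1) + lam := by rw [mul_add, hlamv, mul_one]
    have hnormA : ‖hh ab‖ ≤ R + 2 := by
      have hd : dist (f ab) (f b0) < (v:ℝ) + 1 := by rw [dist_comm]; exact hA2
      have h1 := mul_lt_mul_of_pos_left hd hlampos
      rw [hhnorm]
      linarith
    have hnormB : ‖hh bb‖ ≤ R + 2 := by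
      have hd : dist (f bb) (f b0) < (v:ℝ) + 1 := by rw [dist_comm]; exact hB2
      have h1 := mul_lt_mul_of_pos_left hd hlampos
      rw [hhnorm]
      linarith
    have hwin : dist (hh ab) (hh bb) ∈ Set.Icc R (R + 2) := by
      rw [hhdist]
      constructor
      · have h1 := mul_le_mul_of_nonneg_left hAB1 (le_of_lt hlampos)
        linarith
      · have h1 := mul_lt_mul_of_pos_left hAB2 hlampos
        linarith
    have hgt := hgb (hh ab) (hh bb) hnormA hnormB hwin
    have hle := h𝕄₂ ab bb habSM hbbSM habM2 hbbM2 hsepab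
    simp only [hψ_def] at hle
    linarith


theorem propertyQ_of_uniformContinuous_on_ball
    {X Y : Type*} [NormedAddCommGroup X] [NormedSpace ℝ X] [CompleteSpace X]
    [NormedAddCommGroup Y] [NormedSpace ℝ Y] [CompleteSpace Y]
    (hY : PropertyQ Y) (φ : Metric.closedBall (0 : X) 1 → Y)
    (hφ : UniformContinuous φ)
    (ht : ∃ t ∈ Set.Ioo (0 : ℝ) 1, 0 < exactComp φ t) :
    PropertyQ X := by
  obtain ⟨ε₀, hε₀, hQED⟩ := main_QED hY φ hφ ht
  refine ⟨1 / ε₀, by positivity, ?_⟩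
  intro ε hε k f Hf
  set α : ℝ := ε₀ / ε with hα_def
  have hαpos : 0 < α := by positivity
  set f' : (Fin k → ℕ) → X := fun nb => α • f nb with hf'_def
  have hdist' : ∀ nb mb, dist (f' nb) (f' mb) = α * dist (f nb) (f mb) := by
    intro nb mb
    simp only [hf'_def]
    rw [dist_smul₀, Real.norm_eq_abs, abs_of_pos hαpos]
  have Hf' : ∀ nb mb : Fin k → ℕ, StrictMono nb → StrictMono mb → Interlace nb mb →
      dist (f' nb) (f' mb) ≤ 1 := by
    intro nb mb hn hm hint
    rw [hdist']
    have h1 := Hf nb mb hn hm hint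
    have h2 : α * (1 / ε₀ * ε) = 1 := by
      rw [hα_def]
      field_simp
    calc α * dist (f nb) (f mb) ≤ α * (1 / ε₀ * ε) :=
          mul_le_mul_of_nonneg_left h1 (le_of_lt hαpos)
      _ = 1 := h2
  obtain ⟨𝕄, h𝕄inf, h𝕄⟩ := hQED k f' Hf'
  refine ⟨𝕄, h𝕄inf, ?_⟩
  intro nb mb hn hm hnM hmM hsep
  have h1 := h𝕄 nb mb hn hm hnM hmM hsep
  rw [hdist'] at h1
  have h2 : dist (f nb) (f mb) ≤ ε₀ / α :=
    (le_div_iff₀ hαpos).mpr (by linarith [mul_comm α (dist (f nb) (f mb))])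
  have h3 : ε₀ / α = ε := by
    rw [hα_def]
    field_simp
  rw [h3] at h2
  exact h2
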